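/- Let n, s ≥ 0 and r ≥ 1 be integers and 0 ≤ j ≤ r−1. Under the exactness assumption, the boundary weight attached to the j-th derivative at a satisfies λ_0^{(j)} = ∫ P_{n,r,s,a,j}(t) dλ(t). -/

import Mathlib

open MeasureTheory

/-- The generalized Gauss–Radau/Gauss–Lobatto quadrature
`Q_{n,r,s}(f) = Σ_{j<r} λ₀^{(j)} f^{(j)}(a) + Σ_{j<n} λ_j f(τ_j) + Σ_{j<s} (-1)^j λ_{n+1}^{(j)} f^{(j)}(b)`,
where derivatives are taken within `[a,b]`. -/
noncomputable def quad (a b : ℝ) (n r s : ℕ) (τ w0 wi w1 : ℕ → ℝ) (f : ℝ → ℝ) : ℝ :=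
  (∑ j ∈ Finset.range r, w0 j * iteratedDerivWithin j f (Set.Icc a b) a)
  + (∑ j ∈ Finset.range n, wi j * f (τ j))
  + (∑ j ∈ Finset.range s, (-1 : ℝ) ^ j * w1 j * iteratedDerivWithin j f (Set.Icc a b) b)

/-- `ω(t) = (b-t)^s ∏_{k=1}^n (τ_k - t)^2`. -/
noncomputable def omegaFun (b : ℝ) (n s : ℕ) (τ : ℕ → ℝ) (t : ℝ) : ℝ :=
  (b - t) ^ s * ∏ k ∈ Finset.range n, (τ k - t) ^ 2

/-- `Ω_m(t)`, the `m`-th partial sum of the Taylor expansion of `1/ω` at `t = a`. -/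
noncomputable def OmegaFun (a b : ℝ) (n s : ℕ) (τ : ℕ → ℝ) (m : ℕ) (t : ℝ) : ℝ :=
  ∑ ℓ ∈ Finset.range (m + 1),
    (t - a) ^ ℓ * iteratedDeriv ℓ (fun u => (omegaFun b n s τ u)⁻¹) a / (ℓ.factorial : ℝ)

/-- `P_{n,r,s,a,j}(t) = ((t-a)^j / j!) Ω_{r-j-1}(t) ω(t)`. -/
noncomputable def PaFun (a b : ℝ) (n r s : ℕ) (τ : ℕ → ℝ) (j : ℕ) (t : ℝ) : ℝ :=
  ((t - a) ^ j / (j.factorial : ℝ)) * OmegaFun a b n s τ (r - j - 1) t * omegaFun b n s τ t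

section Aux
open Polynomial Set


private lemma polyCD (p : ℝ[X]) : ContDiff ℝ (⊤ : ℕ∞) fun x : ℝ => p.eval x := by
  induction p using Polynomial.induction_on' with
  | add p q hp hq => simpa using hp.add hq
  | monomial n c => simpa [Polynomial.eval_monomial] using
      (contDiff_const (c := c)).mul (contDiff_id.pow n)

private lemma iteratedDeriv_polyeval (p : ℝ[X]) (k : ℕ) :
    iteratedDeriv k (fun x : ℝ => p.eval x) = fun x => (Polynomial.derivative^[k] p).eval x := by
  induction k generalizing p with
  | zero => simp
  | succ k ih =>
    rw [iteratedDeriv_succ']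
    have h : deriv (fun x : ℝ => p.eval x) = fun x => (Polynomial.derivative p).eval x :=
      funext fun x => p.deriv
    rw [h, ih]
    simp [Function.iterate_succ_apply]

private lemma iterate_derivative_eval_eq (p : ℝ[X]) (x : ℝ) (k : ℕ) :
    (Polynomial.derivative^[k] p).eval x = (k.factorial : ℝ) * (Polynomial.taylor x p).coeff k := by
  rw [Polynomial.taylor_coeff, ← Polynomial.factorial_smul_hasseDeriv]
  simp [mul_comm]

private lemma itDW_eq {f : ℝ → ℝ} (hf : ContDiff ℝ (⊤ : ℕ∞) f) {s : Set ℝ}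
    (hs : UniqueDiffOn ℝ s) {x : ℝ} (hx : x ∈ s) (k : ℕ) :
    iteratedDerivWithin k f s x = iteratedDeriv k f x := by
  have H : HasFTaylorSeriesUpTo (⊤ : ℕ∞) f (ftaylorSeries ℝ f) := contDiff_iff_ftaylorSeries.mp hf
  have h1 := (H.hasFTaylorSeriesUpToOn s).eq_iteratedFDerivWithin_of_uniqueDiffOn
    (m := k) (by exact_mod_cast le_top) hs hx
  have h2 := H.eq_iteratedFDeriv (m := k) (by exact_mod_cast le_top) x
  rw [iteratedDerivWithin_eq_iteratedFDerivWithin, iteratedDeriv_eq_iteratedFDeriv, ← h1, ← h2]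

private lemma itd_add {f g : ℝ → ℝ} (hf : ContDiff ℝ (⊤ : ℕ∞) f) (hg : ContDiff ℝ (⊤ : ℕ∞) g)
    (k : ℕ) (x : ℝ) :
    iteratedDeriv k (fun t => f t + g t) x = iteratedDeriv k f x + iteratedDeriv k g x := by
  rw [← iteratedDerivWithin_univ, ← iteratedDerivWithin_univ, ← iteratedDerivWithin_univ]
  exact iteratedDerivWithin_add (Set.mem_univ x) uniqueDiffOn_univ
    ((hf.of_le (by exact_mod_cast (le_top : (k : ℕ∞) ≤ ⊤))).contDiffWithinAt)
    ((hg.of_le (by exact_mod_cast (le_top : (k : ℕ∞) ≤ ⊤))).contDiffWithinAt)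

private lemma itd_sub {f g : ℝ → ℝ} (hf : ContDiff ℝ (⊤ : ℕ∞) f) (hg : ContDiff ℝ (⊤ : ℕ∞) g)
    (k : ℕ) (x : ℝ) :
    iteratedDeriv k (fun t => f t - g t) x = iteratedDeriv k f x - iteratedDeriv k g x := by
  rw [← iteratedDerivWithin_univ, ← iteratedDerivWithin_univ, ← iteratedDerivWithin_univ]
  exact iteratedDerivWithin_sub (Set.mem_univ x) uniqueDiffOn_univ
    ((hf.of_le (by exact_mod_cast (le_top : (k : ℕ∞) ≤ ⊤))).contDiffWithinAt)
    ((hg.of_le (by exact_mod_cast (le_top : (k : ℕ∞) ≤ ⊤))).contDiffWithinAt)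

private lemma itd_const (k : ℕ) (c : ℝ) :
    iteratedDeriv k (fun _ : ℝ => c) = fun _ => if k = 0 then c else 0 := by
  induction k generalizing c with
  | zero => simp
  | succ k ih =>
    rw [iteratedDeriv_succ']
    have h : deriv (fun _ : ℝ => c) = fun _ : ℝ => (0 : ℝ) := funext fun x => deriv_const x c
    rw [h, ih 0]
    simp

private lemma vanish (a : ℝ) : ∀ (i : ℕ) (h : ℝ → ℝ), ContDiff ℝ (⊤ : ℕ∞) h →
    (∀ k ≤ i, iteratedDeriv k h a = 0) → ∀ q : ℝ[X],
    iteratedDeriv i (fun t => h t * q.eval t) a = 0 := by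
  intro i
  induction i with
  | zero =>
    intro h _ h0 q
    have := h0 0 le_rfl
    simp only [iteratedDeriv_zero] at this ⊢
    rw [this, zero_mul]
  | succ i ih =>
    intro h hsm h0 q
    rw [iteratedDeriv_succ']
    have hder : deriv (fun t => h t * q.eval t)
        = fun t => deriv h t * q.eval t + h t * (Polynomial.derivative q).eval t := by
      funext t
      rw [deriv_fun_mul ((hsm.differentiable (by simp)).differentiableAt)
        (((polyCD q).differentiable (by simp)).differentiableAt), q.deriv]
    rw [hder]
    have hsm' : ContDiff ℝ (⊤ : ℕ∞) (deriv h) := (contDiff_infty_iff_deriv.mp hsm).2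
    rw [itd_add (hsm'.mul (polyCD q)) (hsm.mul (polyCD (Polynomial.derivative q))) i a]
    rw [ih (deriv h) hsm' (fun k hk => by rw [← iteratedDeriv_succ']; exact h0 (k+1) (by omega)) q,
      ih h hsm (fun k hk => h0 k (by omega)) (Polynomial.derivative q), add_zero]

open Metric Topology in
private lemma exists_smooth_inv (p : ℝ[X]) (a : ℝ) (ha : p.eval a ≠ 0) :
    ∃ g : ℝ → ℝ, ContDiff ℝ (⊤ : ℕ∞) g ∧ g =ᶠ[𝓝 a] fun t => (p.eval t)⁻¹ := by
  have hUopen : IsOpen {t : ℝ | p.eval t ≠ 0} :=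
    isOpen_compl_singleton.preimage (polyCD p).continuous
  obtain ⟨ε, hε, hball⟩ := Metric.isOpen_iff.mp hUopen a ha
  set bump : ContDiffBump a := ⟨ε / 4, ε / 2, by linarith, by linarith⟩ with hbump
  refine ⟨fun t => bump t * (p.eval t)⁻¹, ?_, ?_⟩
  · rw [contDiff_iff_contDiffAt]
    intro x
    by_cases hx : p.eval x ≠ 0
    · exact (bump.contDiff.contDiffAt).mul (((polyCD p).contDiffAt).inv hx)
    · push_neg at hx
      have hxns : x ∉ tsupport (⇑bump) := by
        rw [bump.tsupport_eq]
        intro hmem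
        exact (hball (Metric.closedBall_subset_ball
          (show bump.rOut < ε by rw [hbump]; norm_num; linarith) hmem)) hx
      have h0 : (fun t => bump t * (p.eval t)⁻¹) =ᶠ[𝓝 x] fun _ => (0 : ℝ) := by
        filter_upwards [notMem_tsupport_iff_eventuallyEq.mp hxns] with t ht
        simp only [Pi.zero_apply] at ht
        simp [ht]
      exact (contDiffAt_const (c := (0 : ℝ))).congr_of_eventuallyEq h0
  · filter_upwards [Metric.ball_mem_nhds a (show (0:ℝ) < ε / 4 by linarith)] with t ht
    rw [bump.one_of_mem_closedBall (Metric.ball_subset_closedBall ht), one_mul]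

private noncomputable def wpoly (b : ℝ) (n s : ℕ) (τ : ℕ → ℝ) : Polynomial ℝ :=
  (C b - X) ^ s * ∏ k ∈ Finset.range n, (C (τ k) - X) ^ 2

private lemma wpoly_eval (b : ℝ) (n s : ℕ) (τ : ℕ → ℝ) (t : ℝ) :
    (wpoly b n s τ).eval t = omegaFun b n s τ t := by
  simp [wpoly, omegaFun, eval_prod]

private noncomputable def Opoly (a b : ℝ) (n s : ℕ) (τ : ℕ → ℝ) (m : ℕ) : Polynomial ℝ :=
  ∑ ℓ ∈ Finset.range (m + 1),
    C (iteratedDeriv ℓ (fun u => (omegaFun b n s τ u)⁻¹) a / (ℓ.factorial : ℝ)) * (X - C a) ^ ℓ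

private lemma wpoly_pos (a b : ℝ) (hab : a < b) (n s : ℕ) (τ : ℕ → ℝ)
    (hτab : ∀ k < n, τ k ∈ Set.Ioo a b) : 0 < (wpoly b n s τ).eval a := by
  rw [wpoly_eval]
  apply mul_pos
  · exact pow_pos (by linarith) s
  · exact Finset.prod_pos fun k hk => by
      have := (hτab k (Finset.mem_range.mp hk)).1
      exact pow_pos (by linarith) 2

private lemma taylor_X_sub_C_pow (a : ℝ) (ℓ : ℕ) :
    Polynomial.taylor a ((X - C a) ^ ℓ) = X ^ ℓ := by
  have tX : Polynomial.taylor a (X - C a) = X := by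
    rw [map_sub, taylor_X, taylor_C]; ring
  induction ℓ with
  | zero => simp
  | succ ℓ ih => rw [pow_succ, taylor_mul, ih, tX, pow_succ]

open Topology in
private lemma key (a b : ℝ) (hab : a < b) (n s : ℕ) (τ : ℕ → ℝ)
    (hτab : ∀ k < n, τ k ∈ Set.Ioo a b) (M : ℕ) (m : ℕ) (hm : m ≤ M) :
    (Polynomial.derivative^[m] (Opoly a b n s τ M * wpoly b n s τ)).eval a
      = if m = 0 then 1 else 0 := by
  set w := wpoly b n s τ with hw
  have haw : w.eval a ≠ 0 := ne_of_gt (wpoly_pos a b hab n s τ hτab)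
  obtain ⟨g, hg, hga⟩ := exists_smooth_inv w a haw
  have hinvfun : (fun u => (omegaFun b n s τ u)⁻¹) = fun u => (w.eval u)⁻¹ := by
    funext u; rw [hw, wpoly_eval]
  set O := Opoly a b n s τ M with hO
  have hOco : ∀ k ≤ M, (Polynomial.taylor a O).coeff k
      = iteratedDeriv k (fun u => (w.eval u)⁻¹) a / (k.factorial : ℝ) := by
    intro k hk
    rw [hO, Opoly, ← hinvfun, map_sum]
    have : ∀ ℓ ∈ Finset.range (M + 1),
        (Polynomial.taylor a (C (iteratedDeriv ℓ (fun u => (omegaFun b n s τ u)⁻¹) a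
          / (ℓ.factorial : ℝ)) * (X - C a) ^ ℓ)).coeff k
        = (iteratedDeriv ℓ (fun u => (omegaFun b n s τ u)⁻¹) a / (ℓ.factorial : ℝ))
          * (if k = ℓ then 1 else 0) := by
      intro ℓ _
      rw [taylor_mul, taylor_C, taylor_X_sub_C_pow, coeff_C_mul, coeff_X_pow]
    rw [finset_sum_coeff, Finset.sum_congr rfl this]
    simp only [mul_ite, mul_one, mul_zero, Finset.sum_ite_eq, Finset.mem_range]
    rw [if_pos (by omega)]
  have hsmh : ContDiff ℝ (⊤ : ℕ∞) (fun t => O.eval t - g t) := (polyCD O).sub hg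
  have hvan : ∀ k ≤ M, iteratedDeriv k (fun t => O.eval t - g t) a = 0 := by
    intro k hk
    rw [itd_sub (polyCD O) hg k a, congrFun (iteratedDeriv_polyeval O k) a,
      iterate_derivative_eval_eq, hOco k hk,
      Filter.EventuallyEq.iteratedDeriv_eq k hga]
    have hfac : (k.factorial : ℝ) ≠ 0 := Nat.cast_ne_zero.mpr k.factorial_ne_zero
    field_simp
    simp
  have hfeq : (fun t : ℝ => (O * w).eval t)
      = fun t => (O.eval t - g t) * w.eval t + g t * w.eval t := by
    funext t; simp only [eval_mul]; ring
  have hone : (fun t => g t * w.eval t) =ᶠ[𝓝 a] fun _ => (1 : ℝ) := by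
    have hne : ∀ᶠ t in 𝓝 a, w.eval t ≠ 0 :=
      ((polyCD w).continuous.continuousAt).eventually_ne haw
    filter_upwards [hga, hne] with t h1 h2
    rw [h1]; exact inv_mul_cancel₀ h2
  calc (Polynomial.derivative^[m] (O * w)).eval a
      = iteratedDeriv m (fun t : ℝ => (O * w).eval t) a :=
        (congrFun (iteratedDeriv_polyeval _ m) a).symm
    _ = iteratedDeriv m (fun t => (O.eval t - g t) * w.eval t) a
        + iteratedDeriv m (fun t => g t * w.eval t) a := by
        rw [hfeq]; exact itd_add (hsmh.mul (polyCD w)) (hg.mul (polyCD w)) m a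
    _ = 0 + iteratedDeriv m (fun _ : ℝ => (1 : ℝ)) a := by
        rw [vanish a m _ hsmh (fun k hk => hvan k (le_trans hk hm)) w,
          Filter.EventuallyEq.iteratedDeriv_eq m hone]
    _ = if m = 0 then 1 else 0 := by rw [zero_add, congrFun (itd_const m 1) a]

private lemma Opoly_eval (a b : ℝ) (n s : ℕ) (τ : ℕ → ℝ) (m : ℕ) (t : ℝ) :
    (Opoly a b n s τ m).eval t = OmegaFun a b n s τ m t := by
  unfold Opoly OmegaFun
  rw [eval_finset_sum]
  refine Finset.sum_congr rfl fun ℓ _ => ?_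
  simp
  ring

private noncomputable def Ppoly (a b : ℝ) (n r s : ℕ) (τ : ℕ → ℝ) (j : ℕ) : Polynomial ℝ :=
  C ((j.factorial : ℝ))⁻¹ * (X - C a) ^ j * (Opoly a b n s τ (r - j - 1) * wpoly b n s τ)

private lemma Ppoly_eval (a b : ℝ) (n r s : ℕ) (τ : ℕ → ℝ) (j : ℕ) (t : ℝ) :
    (Ppoly a b n r s τ j).eval t = PaFun a b n r s τ j t := by
  unfold Ppoly PaFun
  simp [Opoly_eval, wpoly_eval]
  ring

private lemma taylor_pow' (a : ℝ) (p : ℝ[X]) (k : ℕ) :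
    Polynomial.taylor a (p ^ k) = (Polynomial.taylor a p) ^ k := by
  induction k with
  | zero => simp
  | succ k ih => rw [pow_succ, taylor_mul, ih, pow_succ]

private lemma Ppoly_natDegree (a b : ℝ) (n r s : ℕ) (τ : ℕ → ℝ) (j : ℕ)
    (hr : 1 ≤ r) (hj : j ≤ r - 1) :
    (Ppoly a b n r s τ j).natDegree + 1 ≤ 2 * n + r + s := by
  have h1 : (X - C a : ℝ[X]).natDegree ≤ 1 := (natDegree_sub_le _ _).trans (by simp)
  have hw : (wpoly b n s τ).natDegree ≤ s + 2 * n := by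
    unfold wpoly
    refine natDegree_mul_le.trans (add_le_add ?_ ?_)
    · refine natDegree_pow_le.trans ?_
      have : (C b - X : ℝ[X]).natDegree ≤ 1 := (natDegree_sub_le _ _).trans (by simp)
      calc s * (C b - X : ℝ[X]).natDegree ≤ s * 1 := Nat.mul_le_mul_left s this
        _ = s := mul_one s
    · refine (natDegree_prod_le _ _).trans ?_
      calc ∑ k ∈ Finset.range n, ((C (τ k) - X : ℝ[X]) ^ 2).natDegree
          ≤ ∑ _k ∈ Finset.range n, 2 := Finset.sum_le_sum fun k _ => by
            refine natDegree_pow_le.trans ?_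
            have : (C (τ k) - X : ℝ[X]).natDegree ≤ 1 := (natDegree_sub_le _ _).trans (by simp)
            omega
        _ = 2 * n := by simp [Finset.sum_const, mul_comm]
  have hO : (Opoly a b n s τ (r - j - 1)).natDegree ≤ r - j - 1 := by
    unfold Opoly
    refine natDegree_sum_le_of_forall_le _ _ fun ℓ hℓ => ?_
    refine natDegree_mul_le.trans ?_
    have h2 := natDegree_pow_le (p := (X - C a : ℝ[X])) (n := ℓ)
    have hℓ' := Finset.mem_range.mp hℓ
    have h3 : ((X - C a : ℝ[X]) ^ ℓ).natDegree ≤ ℓ := h2.trans (by nlinarith)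
    simp only [natDegree_C]
    omega
  have hPd : (Ppoly a b n r s τ j).natDegree ≤ j + ((r - j - 1) + (s + 2 * n)) := by
    unfold Ppoly
    refine natDegree_mul_le.trans ?_
    have hXj : ((X - C a : ℝ[X]) ^ j).natDegree ≤ j := natDegree_pow_le.trans (by nlinarith)
    have hCA : (C ((j.factorial : ℝ))⁻¹ * (X - C a) ^ j).natDegree ≤ j :=
      natDegree_mul_le.trans (by simp only [natDegree_C]; omega)
    have hOw : (Opoly a b n s τ (r - j - 1) * wpoly b n s τ).natDegree
        ≤ (r - j - 1) + (s + 2 * n) := natDegree_mul_le.trans (add_le_add hO hw)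
    omega
  omega

private lemma Ppoly_deriv_a (a b : ℝ) (hab : a < b) (n r s : ℕ) (τ : ℕ → ℝ)
    (hτab : ∀ k < n, τ k ∈ Set.Ioo a b) (j : ℕ) (hr : 1 ≤ r) (hj : j ≤ r - 1)
    (i : ℕ) (hi : i < r) :
    (Polynomial.derivative^[i] (Ppoly a b n r s τ j)).eval a = if i = j then 1 else 0 := by
  have hG : ∀ m ≤ r - j - 1,
      (Polynomial.taylor a (Opoly a b n s τ (r - j - 1) * wpoly b n s τ)).coeff m
        = if m = 0 then 1 else 0 := by
    intro m hm
    have h1 := iterate_derivative_eval_eq (Opoly a b n s τ (r - j - 1) * wpoly b n s τ) a m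
    rw [key a b hab n s τ hτab (r - j - 1) m hm] at h1
    rcases Nat.eq_zero_or_pos m with h | h
    · subst h; simpa using h1.symm
    · rw [if_neg (by omega)] at h1 ⊢
      have hfac : (m.factorial : ℝ) ≠ 0 := Nat.cast_ne_zero.mpr m.factorial_ne_zero
      rcases mul_eq_zero.mp h1.symm with hc | hc
      · exact absurd hc hfac
      · exact hc
  have tP : Polynomial.taylor a (Ppoly a b n r s τ j)
      = C ((j.factorial : ℝ))⁻¹ * (Polynomial.taylor a
          (Opoly a b n s τ (r - j - 1) * wpoly b n s τ) * X ^ j) := by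
    unfold Ppoly
    rw [taylor_mul, taylor_mul, taylor_C, taylor_X_sub_C_pow]
    ring
  rw [iterate_derivative_eval_eq, tP, coeff_C_mul, coeff_mul_X_pow']
  by_cases hij : j ≤ i
  · rw [if_pos hij, hG (i - j) (by omega)]
    by_cases hii : i = j
    · subst hii
      rw [if_pos (by omega), if_pos rfl, mul_one]
      exact mul_inv_cancel₀ (Nat.cast_ne_zero.mpr i.factorial_ne_zero)
    · rw [if_neg (by omega), if_neg hii, mul_zero, mul_zero]
  · rw [if_neg hij, if_neg (by omega), mul_zero, mul_zero]

private lemma Ppoly_deriv_b (a b : ℝ) (n r s : ℕ) (τ : ℕ → ℝ) (j : ℕ)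
    (i : ℕ) (hi : i < s) :
    (Polynomial.derivative^[i] (Ppoly a b n r s τ j)).eval b = 0 := by
  have hsplit : Ppoly a b n r s τ j
      = (C ((j.factorial : ℝ))⁻¹ * (X - C a) ^ j
          * (Opoly a b n s τ (r - j - 1) * ∏ k ∈ Finset.range n, (C (τ k) - X) ^ 2))
        * (C b - X) ^ s := by
    unfold Ppoly wpoly; ring
  have tb : Polynomial.taylor b (C b - X : ℝ[X]) = -X := by
    rw [map_sub, taylor_C, taylor_X]; ring
  rw [iterate_derivative_eval_eq, hsplit, taylor_mul, taylor_pow', tb]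
  rw [show ((-X : ℝ[X]) ^ s) = (-1) ^ s * X ^ s by rw [neg_pow]]
  rw [show (Polynomial.taylor b (C ((j.factorial : ℝ))⁻¹ * (X - C a) ^ j
      * (Opoly a b n s τ (r - j - 1) * ∏ k ∈ Finset.range n, (C (τ k) - X) ^ 2)))
      * ((-1 : ℝ[X]) ^ s * X ^ s)
      = (Polynomial.taylor b (C ((j.factorial : ℝ))⁻¹ * (X - C a) ^ j
      * (Opoly a b n s τ (r - j - 1) * ∏ k ∈ Finset.range n, (C (τ k) - X) ^ 2))
        * (-1 : ℝ[X]) ^ s) * X ^ s from by ring]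
  rw [coeff_mul_X_pow', if_neg (by omega), mul_zero]

end Aux

/-- under the exactness assumption,
`λ₀^{(j)} = ∫ P_{n,r,s,a,j}(t) dλ(t)` for `0 ≤ j ≤ r-1`. -/
theorem left_weight_integral_formula
    (a b : ℝ) (hab : a < b)
    (μ : Measure ℝ) [IsFiniteMeasure μ]
    (hsupp : μ (Set.Icc a b)ᶜ = 0)
    (hinf : {x | x ∈ Set.Ioo a b ∧ ∀ ε > 0, 0 < μ (Set.Ioo (x - ε) (x + ε))}.Infinite)
    (n r s : ℕ) (hr : 1 ≤ r)
    (τ w0 wi w1 : ℕ → ℝ)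
    (hτab : ∀ k < n, τ k ∈ Set.Ioo a b)
    (hτmono : ∀ i k, i < k → k < n → τ i < τ k)
    (hex : ∀ p : Polynomial ℝ, p.natDegree + 1 ≤ 2 * n + r + s →
      quad a b n r s τ w0 wi w1 (fun t => p.eval t) = ∫ t, p.eval t ∂μ)
    (j : ℕ) (hj : j ≤ r - 1) :
    w0 j = ∫ t, PaFun a b n r s τ j t ∂μ := by
  set P := Ppoly a b n r s τ j with hP
  have hquad := hex P (Ppoly_natDegree a b n r s τ j hr hj)
  unfold quad at hquad
  have h1 : ∑ i ∈ Finset.range r,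
      w0 i * iteratedDerivWithin i (fun t => P.eval t) (Set.Icc a b) a = w0 j := by
    have hc : ∀ i ∈ Finset.range r,
        w0 i * iteratedDerivWithin i (fun t => P.eval t) (Set.Icc a b) a
          = if i = j then w0 j else 0 := by
      intro i hi
      rw [itDW_eq (polyCD P) (uniqueDiffOn_Icc hab) (Set.left_mem_Icc.mpr hab.le) i,
        congrFun (iteratedDeriv_polyeval P i) a,
        Ppoly_deriv_a a b hab n r s τ hτab j hr hj i (Finset.mem_range.mp hi)]
      by_cases h : i = j <;> simp [h]
    rw [Finset.sum_congr rfl hc, Finset.sum_ite_eq' (Finset.range r) j (fun _ => w0 j),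
      if_pos (Finset.mem_range.mpr (by omega))]
  have h2 : ∑ i ∈ Finset.range n, wi i * P.eval (τ i) = 0 := by
    refine Finset.sum_eq_zero fun i hi => ?_
    have hwz : (wpoly b n s τ).eval (τ i) = 0 := by
      rw [wpoly_eval]
      unfold omegaFun
      rw [Finset.prod_eq_zero (Finset.mem_range.mpr (Finset.mem_range.mp hi)) (by ring), mul_zero]
    rw [hP]
    unfold Ppoly
    simp [hwz]
  have h3 : ∑ i ∈ Finset.range s,
      (-1 : ℝ) ^ i * w1 i * iteratedDerivWithin i (fun t => P.eval t) (Set.Icc a b) b = 0 := by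
    refine Finset.sum_eq_zero fun i hi => ?_
    rw [itDW_eq (polyCD P) (uniqueDiffOn_Icc hab) (Set.right_mem_Icc.mpr hab.le) i,
      congrFun (iteratedDeriv_polyeval P i) b,
      Ppoly_deriv_b a b n r s τ j i (Finset.mem_range.mp hi), mul_zero]
  rw [h1, h2, h3, add_zero, add_zero] at hquad
  rw [hquad]
  congr 1
  funext t
  exact Ppoly_eval a b n r s τ j t
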